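/- Let λ be an uncountable cardinal and ⟨C_α : α < λ⁺⟩ a □_λ-sequence with otp(C_α) < λ for all α with cf(α) < λ. Let S ⊆ E^{λ⁺}_ω be a stationary set that reflects stationarily often, i.e., T := {α < λ⁺ : cf(α) > ω and S ∩ α is stationary in α} is stationary. For a club E ⊆ λ⁺ and limit α, define drop(α,E) := {sup(E ∩ β) : β ∈ C_α \ min(E)}. Then there exists a club D* ⊆ λ⁺ such that for every club D ⊆ λ⁺ there exists α ∈ S with drop(α,D*) ⊆ D and sup(acc(drop(α,D*))) = α. -/

import Mathlib

open Ordinal Set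

noncomputable section

/-- The set of accumulation points of `C` that belong to `C`. -/
def acc (C : Set Ordinal) : Set Ordinal :=
  {β | β ∈ C ∧ ∀ γ < β, ∃ δ ∈ C, γ < δ ∧ δ < β}

/-- Non-accumulation points of `C`. -/
def nacc (C : Set Ordinal) : Set Ordinal := C \ acc C

/-- `X ∩ α` is cofinal in `α`. -/
def CofinalIn (X : Set Ordinal) (α : Ordinal) : Prop :=
  ∀ γ < α, ∃ δ ∈ X, γ < δ ∧ δ < α

/-- Accumulation points of `C` (not necessarily members of `C`). -/
def accPlus (C : Set Ordinal) : Set Ordinal :=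
  {β | (∃ δ ∈ C, δ < β) ∧ ∀ γ < β, ∃ δ ∈ C, γ < δ ∧ δ < β}

def IsClosedSet (C : Set Ordinal) : Prop := accPlus C ⊆ C

/-- `C` is a club (closed and unbounded) subset of `α`. -/
def IsClubIn (C : Set Ordinal) (α : Ordinal) : Prop :=
  C ⊆ Set.Iio α ∧ CofinalIn C α ∧ ∀ β < α, β ∈ accPlus C → β ∈ C

/-- The `i`-th element of the set of ordinals `C` (the inverse collapse of `C`). -/
def nth (C : Set Ordinal) (i : Ordinal) : Ordinal :=
  sInf (C \ Set.range (fun j : Set.Iio i => nth C j.1))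
termination_by i
decreasing_by exact j.2

/-- The order type of a set of ordinals: the least `i` such that the first `i`
elements of `C` exhaust `C`. -/
def otp (C : Set Ordinal) : Ordinal :=
  sInf {i | C ⊆ Set.range (fun j : Set.Iio i => nth C j.1)}

/-- The image of `E` under the order isomorphism (inverse collapse) `π_C : otp(C) → C`. -/
def collapseImage (C E : Set Ordinal) : Set Ordinal :=
  {β | β ∈ C ∧ otp (C ∩ Set.Iio β) ∈ E}

def IsStationaryIn (S : Set Ordinal) (α : Ordinal) : Prop :=
  ∀ D, IsClubIn D α → (S ∩ D).Nonempty

/-- A `□_λ`-sequence. -/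
def IsSquareSeq (lam : Cardinal) (C : Ordinal → Set Ordinal) : Prop :=
  ∀ α < (Order.succ lam).ord, Order.IsSuccLimit α →
    IsClubIn (C α) α ∧ otp (C α) ≤ lam.ord ∧
    ∀ β ∈ acc (C α), C β = C α ∩ Set.Iio β

/-- An Ostaszewski square (`⊠_λ`) sequence. -/
def IsOstSeq (lam : Cardinal) (C : Ordinal → Set Ordinal) : Prop :=
  IsSquareSeq lam C ∧
  ∀ A : Ordinal → Set Ordinal,
    (∀ i < lam.ord, CofinalIn (A i) (Order.succ lam).ord) →
    ∀ θ < lam.ord, Order.IsSuccLimit θ →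
    ∀ D, IsClubIn D (Order.succ lam).ord →
    ∃ α < (Order.succ lam).ord, otp (C α) = θ ∧
      ∀ i < θ, nth (C α) (i + 1) ∈ A i ∧
        ∃ β ∈ D, nth (C α) i < β ∧ β < nth (C α) (i + 1)

/-- `drop(α, E)` for the square sequence `C`. -/
def dropSet (C : Ordinal → Set Ordinal) (α : Ordinal) (E : Set Ordinal) : Set Ordinal :=
  (fun β => sSup (E ∩ Set.Iio β)) '' {β | β ∈ C α ∧ sInf E ≤ β}

namespace Helpers

lemma bddAbove_of_subset_Iio {X : Set Ordinal} {κ : Ordinal} (h : X ⊆ Set.Iio κ) :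
    BddAbove X := ⟨κ, fun _ hx => (h hx).le⟩

lemma sSup_le_of_subset_Iio {X : Set Ordinal} {β : Ordinal} (h : X ⊆ Set.Iio β) :
    sSup X ≤ β := by
  rcases X.eq_empty_or_nonempty with rfl | hne
  · simp
  · exact csSup_le hne fun x hx => (h hx).le

lemma accPlus_mono {A B : Set Ordinal} (h : A ⊆ B) : accPlus A ⊆ accPlus B := by
  rintro β ⟨⟨δ, hδ, hδβ⟩, h2⟩
  exact ⟨⟨δ, h hδ, hδβ⟩, fun γ hγ => by
    obtain ⟨δ', hδ', h1, h2'⟩ := h2 γ hγ; exact ⟨δ', h hδ', h1, h2'⟩⟩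

lemma mem_of_sSup {A X : Set Ordinal} {κ : Ordinal}
    (hcl : ∀ β < κ, β ∈ accPlus A → β ∈ A) (hXA : X ⊆ A) (hne : X.Nonempty)
    (hbdd : BddAbove X) (hlt : sSup X < κ) : sSup X ∈ A := by
  by_cases hs : sSup X ∈ X
  · exact hXA hs
  · refine hcl _ hlt ⟨?_, ?_⟩
    · obtain ⟨x, hx⟩ := hne
      have hxle : x ≤ sSup X := le_csSup hbdd hx
      exact ⟨x, hXA hx, lt_of_le_of_ne hxle (fun h => hs (h ▸ hx))⟩
    · intro γ hγ
      obtain ⟨a, ha, hγa⟩ := exists_lt_of_lt_csSup hne hγ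
      exact ⟨a, hXA ha, hγa, lt_of_le_of_ne (le_csSup hbdd ha) (fun h => hs (h ▸ ha))⟩


lemma exists_bound_nat {κ : Ordinal} (hcof : Cardinal.aleph0 < κ.cof) (g : ℕ → Ordinal)
    (hg : ∀ n, g n < κ) : ∃ b < κ, ∀ n, g n ≤ b := by
  refine ⟨iSup g, Ordinal.iSup_lt_ord_lift (f := g) (by simpa using hcof) hg, fun n => ?_⟩
  exact le_ciSup (by exact ⟨κ, by rintro x ⟨n, rfl⟩; exact (hg n).le⟩) n

lemma exists_bound_ord {κ θ : Ordinal} (hcof : θ.card < κ.cof) (g : Ordinal → Ordinal)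
    (hg : ∀ j < θ, g j < κ) : ∃ b < κ, ∀ j < θ, g j ≤ b := by
  set f : θ.ToType → Ordinal := fun x => g ((Ordinal.ToType.mk (o := θ)).symm x).1 with hf
  have hflt : ∀ x, f x < κ := fun x => hg _ ((Ordinal.ToType.mk (o := θ)).symm x).2
  refine ⟨iSup f, Ordinal.iSup_lt_ord (f := f) (by rwa [Cardinal.mk_toType]) hflt, fun j hj => ?_⟩
  have : g j = f (Ordinal.ToType.mk (o := θ) ⟨j, hj⟩) := by
    simp [hf]
  rw [this]
  exact le_ciSup ⟨κ, by rintro x ⟨y, rfl⟩; exact (hflt y).le⟩ _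

/-- Build a limit point accumulating each of countably many cofinal sets. -/
lemma seq_construct {γ x : Ordinal} (T : ℕ → Set Ordinal) (hT : ∀ n, CofinalIn (T n) γ)
    (hx : x < γ) (hcof : Cardinal.aleph0 < γ.cof) :
    ∃ δ, x < δ ∧ δ < γ ∧ ∀ n, (∃ z ∈ T n, z < δ) ∧ ∀ y < δ, ∃ z ∈ T n, y < z ∧ z < δ := by
  have step : ∀ (p : {o : Ordinal // o < γ}) (k : ℕ),
      ∃ z ∈ T (Nat.unpair k).1, p.1 < z ∧ z < γ := fun p k => hT _ p.1 p.2
  let e : ℕ → {o : Ordinal // o < γ} := fun k => Nat.rec ⟨x, hx⟩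
    (fun k p => ⟨(step p k).choose, (step p k).choose_spec.2.2⟩) k
  have he : ∀ k, (e (k+1)).1 ∈ T (Nat.unpair k).1 ∧ (e k).1 < (e (k+1)).1 :=
    fun k => ⟨(step (e k) k).choose_spec.1, (step (e k) k).choose_spec.2.1⟩
  have hmono : ∀ {k l : ℕ}, k < l → (e k).1 < (e l).1 := by
    intro k l h
    induction h with
    | refl => exact (he k).2
    | step _ ih => exact ih.trans (he _).2
  have hbdd : BddAbove (Set.range fun k => (e k).1) :=
    ⟨γ, by rintro z ⟨k, rfl⟩; exact (e k).2.le⟩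
  set δ := iSup (fun k => (e k).1) with hδ
  have hlt : ∀ k, (e k).1 < δ := fun k =>
    lt_of_lt_of_le (he k).2 (le_ciSup hbdd (k+1))
  have hδγ : δ < γ := Ordinal.iSup_lt_ord_lift (f := fun k => (e k).1) (by simpa using hcof) (fun k => (e k).2)
  refine ⟨δ, lt_of_le_of_lt (le_refl x) (hlt 0), hδγ, fun n => ?_⟩
  constructor
  · refine ⟨(e (Nat.pair n 0 + 1)).1, ?_, hlt (Nat.pair n 0 + 1)⟩
    have h := (he (Nat.pair n 0)).1
    rwa [Nat.unpair_pair] at h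
  · intro y hy
    obtain ⟨k, hk⟩ := (lt_ciSup_iff hbdd).mp hy
    have h := (he (Nat.pair n (k+1))).1
    rw [Nat.unpair_pair] at h
    refine ⟨(e (Nat.pair n (k+1) + 1)).1, h, ?_, hlt (Nat.pair n (k+1) + 1)⟩
    exact lt_of_lt_of_le hk (le_of_lt (lt_of_lt_of_le (hmono (Nat.lt_of_lt_of_le (Nat.lt_succ_self k) (Nat.right_le_pair n (k+1)))) (le_of_lt (he (Nat.pair n (k+1))).2)))



lemma club_Iio {κ : Ordinal} (hκ : Order.IsSuccLimit κ) : IsClubIn (Set.Iio κ) κ := by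
  refine ⟨Set.Subset.rfl, fun γ hγ => ⟨γ+1, hκ.succ_lt hγ, lt_add_one γ, hκ.succ_lt hγ⟩,
    fun β hβ _ => hβ⟩

lemma club_Ioi_inter {A : Set Ordinal} {κ c : Ordinal} (hA : IsClubIn A κ) (hc : c < κ) :
    IsClubIn (A ∩ Set.Ioi c) κ := by
  obtain ⟨h1, h2, h3⟩ := hA
  refine ⟨fun x hx => h1 hx.1, fun γ hγ => ?_, fun β hβκ hβ => ?_⟩
  · obtain ⟨δ, hδA, hδ1, hδ2⟩ := h2 (max γ c) (max_lt hγ hc)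
    exact ⟨δ, ⟨hδA, lt_of_le_of_lt (le_max_right γ c) hδ1⟩, lt_of_le_of_lt (le_max_left γ c) hδ1, hδ2⟩
  · obtain ⟨⟨δ, hδ, hδβ⟩, _⟩ := id hβ
    exact ⟨h3 β hβκ (accPlus_mono Set.inter_subset_left hβ), hδ.2.trans hδβ⟩

lemma club_inter_pair {γ : Ordinal} {A B : Set Ordinal} (hcof : Cardinal.aleph0 < γ.cof)
    (hA : IsClubIn A γ) (hB : IsClubIn B γ) : IsClubIn (A ∩ B) γ := by
  refine ⟨fun x hx => hA.1 hx.1, fun x hx => ?_, fun β hβκ hβ => ?_⟩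
  · obtain ⟨δ, hδ1, hδ2, hδ3⟩ := seq_construct
      (fun n => if n % 2 = 0 then A else B)
      (fun n => by split <;> [exact hA.2.1; exact hB.2.1]) hx hcof
    have hmemA : δ ∈ accPlus A := by
      have h := hδ3 0; simp only [Nat.zero_mod, if_pos rfl] at h
      exact ⟨h.1, h.2⟩
    have hmemB : δ ∈ accPlus B := by
      have h := hδ3 1
      norm_num at h
      exact ⟨h.1, h.2⟩
    exact ⟨δ, ⟨hA.2.2 δ hδ2 hmemA, hB.2.2 δ hδ2 hmemB⟩, hδ1, hδ2⟩
  · exact ⟨hA.2.2 β hβκ (accPlus_mono Set.inter_subset_left hβ),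
      hB.2.2 β hβκ (accPlus_mono Set.inter_subset_right hβ)⟩

/-- accumulation points of a cofinal set form a cofinal set (when `cof > ω`). -/
lemma accPlus_cofinal {γ : Ordinal} {X : Set Ordinal} (hcof : Cardinal.aleph0 < γ.cof)
    (hX : CofinalIn X γ) : CofinalIn (accPlus X ∩ Set.Iio γ) γ := by
  intro x hx
  obtain ⟨δ, h1, h2, h3⟩ := seq_construct (fun _ => X) (fun _ => hX) hx hcof
  exact ⟨δ, ⟨⟨(h3 0).1, (h3 0).2⟩, h2⟩, h1, h2⟩

/-- intersection of fewer than `cof κ` clubs indexed by ordinals below `ϑ`. -/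
lemma club_iInter_ord {κ ϑ : Ordinal} {g : Ordinal → Set Ordinal}
    (hκ : Order.IsSuccLimit κ) (hcof : Cardinal.aleph0 < κ.cof) (hcard : ϑ.card < κ.cof)
    (hg : ∀ j < ϑ, IsClubIn (g j) κ) :
    IsClubIn (Set.Iio κ ∩ ⋂ j : Set.Iio ϑ, g j.1) κ := by
  refine ⟨Set.inter_subset_left, ?_, ?_⟩
  · -- cofinal
    intro x hx
    have step : ∀ y < κ, ∃ b < κ, y < b ∧ ∀ j < ϑ, ∃ z ∈ g j, y < z ∧ z ≤ b := by
      intro y hy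
      have pick : ∀ j < ϑ, ∃ z ∈ g j, y < z ∧ z < κ := fun j hj => (hg j hj).2.1 y hy
      set p : Ordinal → Ordinal := fun j =>
        if hj : j < ϑ then (pick j hj).choose else 0 with hp
      have hplt : ∀ j < ϑ, p j < κ := by
        intro j hj; rw [hp]; simp only [dif_pos hj]; exact (pick j hj).choose_spec.2.2
      obtain ⟨b0, hb0, hb0'⟩ := exists_bound_ord hcard p hplt
      refine ⟨max b0 (y+1), max_lt hb0 (hκ.succ_lt hy),
        lt_of_lt_of_le (lt_add_one y) (le_max_right _ _), fun j hj => ?_⟩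
      refine ⟨(pick j hj).choose, (pick j hj).choose_spec.1, (pick j hj).choose_spec.2.1, ?_⟩
      refine le_trans ?_ (le_max_left _ _)
      simpa only [hp, dif_pos hj] using hb0' j hj
    let e : ℕ → {o : Ordinal // o < κ} := fun k => Nat.rec ⟨x, hx⟩
      (fun _ q => ⟨(step q.1 q.2).choose, (step q.1 q.2).choose_spec.1⟩) k
    have he : ∀ k, (e k).1 < (e (k+1)).1 ∧ ∀ j < ϑ, ∃ z ∈ g j, (e k).1 < z ∧ z ≤ (e (k+1)).1 := by
      intro k
      have h := (step (e k).1 (e k).2).choose_spec.2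
      exact ⟨h.1, h.2⟩
    have hbdd : BddAbove (Set.range fun k => (e k).1) :=
      ⟨κ, by rintro z ⟨k, rfl⟩; exact (e k).2.le⟩
    set δ := iSup (fun k => (e k).1) with hδdef
    have hlt : ∀ k, (e k).1 < δ := fun k => lt_of_lt_of_le (he k).1 (le_ciSup hbdd (k+1))
    have hδκ : δ < κ := Ordinal.iSup_lt_ord_lift (f := fun k => (e k).1)
      (by simpa using hcof) (fun k => (e k).2)
    have hδg : ∀ j < ϑ, δ ∈ g j := by
      intro j hj
      refine (hg j hj).2.2 δ hδκ ⟨?_, ?_⟩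
      · obtain ⟨z, hz, _, hz2⟩ := (he 0).2 j hj
        exact ⟨z, hz, lt_of_le_of_lt hz2 (hlt 1)⟩
      · intro y hy
        obtain ⟨k, hk⟩ := (lt_ciSup_iff hbdd).mp hy
        obtain ⟨z, hz, hz1, hz2⟩ := (he k).2 j hj
        exact ⟨z, hz, hk.trans hz1, lt_of_le_of_lt hz2 (hlt (k+1))⟩
    refine ⟨δ, ⟨hδκ, Set.mem_iInter.mpr fun j => hδg j.1 j.2⟩, hlt 0, hδκ⟩
  · intro β hβκ hβ
    refine ⟨hβκ, Set.mem_iInter.mpr fun j => ?_⟩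
    refine (hg j.1 j.2).2.2 β hβκ ⟨?_, ?_⟩
    · obtain ⟨⟨z, hz, hzβ⟩, _⟩ := hβ
      exact ⟨z, (Set.mem_iInter.mp hz.2) j, hzβ⟩
    · intro y hy
      obtain ⟨_, h2⟩ := hβ
      obtain ⟨z, hz, hz1, hz2⟩ := h2 y hy
      exact ⟨z, (Set.mem_iInter.mp hz.2) j, hz1, hz2⟩

/-- The diagonal intersection of clubs `A c` is a club. -/
lemma diag_club {κ : Ordinal} (hκ : Order.IsSuccLimit κ) (hcof : Cardinal.aleph0 < κ.cof)
    (hcard : ∀ y < κ, y.card < κ.cof) (A : Ordinal → Set Ordinal)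
    (hA : ∀ c < κ, IsClubIn (A c) κ) :
    IsClubIn (Set.Iio κ ∩ {δ | ∀ c < δ, δ ∈ A c}) κ := by
  refine ⟨Set.inter_subset_left, ?_, ?_⟩
  · intro x hx
    have step : ∀ y < κ, ∃ b < κ, y < b ∧ ∀ c < y, ∃ z ∈ A c, y < z ∧ z ≤ b := by
      intro y hy
      have pick : ∀ c < y, ∃ z ∈ A c, y < z ∧ z < κ := fun c hc => (hA c (hc.trans hy)).2.1 y hy
      set p : Ordinal → Ordinal := fun c => if hc : c < y then (pick c hc).choose else 0 with hp
      have hplt : ∀ c < y, p c < κ := by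
        intro c hc; rw [hp]; simp only [dif_pos hc]; exact (pick c hc).choose_spec.2.2
      obtain ⟨b0, hb0, hb0'⟩ := exists_bound_ord (hcard y hy) p hplt
      refine ⟨max b0 (y+1), max_lt hb0 (hκ.succ_lt hy),
        lt_of_lt_of_le (lt_add_one y) (le_max_right _ _), fun c hc => ?_⟩
      refine ⟨(pick c hc).choose, (pick c hc).choose_spec.1, (pick c hc).choose_spec.2.1, ?_⟩
      refine le_trans ?_ (le_max_left _ _)
      simpa only [hp, dif_pos hc] using hb0' c hc
    let e : ℕ → {o : Ordinal // o < κ} := fun k => Nat.rec ⟨x, hx⟩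
      (fun _ q => ⟨(step q.1 q.2).choose, (step q.1 q.2).choose_spec.1⟩) k
    have he : ∀ k, (e k).1 < (e (k+1)).1 ∧ ∀ c < (e k).1, ∃ z ∈ A c, (e k).1 < z ∧ z ≤ (e (k+1)).1 :=
      fun k => ⟨(step (e k).1 (e k).2).choose_spec.2.1, (step (e k).1 (e k).2).choose_spec.2.2⟩
    have hmono : ∀ {k l : ℕ}, k < l → (e k).1 < (e l).1 := by
      intro k l h
      induction h with
      | refl => exact (he k).1
      | step _ ih => exact ih.trans (he _).1
    have hbdd : BddAbove (Set.range fun k => (e k).1) :=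
      ⟨κ, by rintro z ⟨k, rfl⟩; exact (e k).2.le⟩
    set δ := iSup (fun k => (e k).1) with hδdef
    have hlt : ∀ k, (e k).1 < δ := fun k => lt_of_lt_of_le (he k).1 (le_ciSup hbdd (k+1))
    have hδκ : δ < κ := Ordinal.iSup_lt_ord_lift (f := fun k => (e k).1)
      (by simpa using hcof) (fun k => (e k).2)
    refine ⟨δ, ⟨hδκ, fun c hc => ?_⟩, hlt 0, hδκ⟩
    obtain ⟨k, hk⟩ := (lt_ciSup_iff hbdd).mp hc
    refine (hA c (hc.trans hδκ)).2.2 δ hδκ ⟨?_, ?_⟩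
    · obtain ⟨z, hz, hz1, hz2⟩ := (he k).2 c hk
      exact ⟨z, hz, lt_of_le_of_lt hz2 (hlt (k+1))⟩
    · intro y hy
      obtain ⟨l, hl⟩ := (lt_ciSup_iff hbdd).mp hy
      have hkl : (e (max k l)).1 < δ := hlt _
      have h1 : c < (e (max k l)).1 := by
        rcases Nat.eq_or_lt_of_le (Nat.le_max_left k l) with h | h
        · exact h ▸ hk
        · exact hk.trans (hmono h)
      obtain ⟨z, hz, hz1, hz2⟩ := (he (max k l)).2 c h1
      have h2 : y < z := by
        rcases Nat.eq_or_lt_of_le (Nat.le_max_right k l) with h | h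
        · exact (h ▸ hl).trans hz1
        · exact (hl.trans (hmono h)).trans hz1
      exact ⟨z, hz, h2, lt_of_le_of_lt hz2 (hlt (max k l + 1))⟩
  · intro β hβκ hβ
    refine ⟨hβκ, fun c hc => ?_⟩
    refine (hA c (hc.trans hβκ)).2.2 β hβκ ⟨?_, ?_⟩
    · obtain ⟨_, h2⟩ := hβ
      obtain ⟨z, hz, hz1, hz2⟩ := h2 c hc
      exact ⟨z, hz.2 c hz1, hz2⟩
    · intro y hy
      obtain ⟨_, h2⟩ := hβ
      obtain ⟨z, hz, hz1, hz2⟩ := h2 (max c y) (max_lt hc hy)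
      exact ⟨z, hz.2 c (lt_of_le_of_lt (le_max_left _ _) hz1), lt_of_le_of_lt (le_max_right _ _) hz1, hz2⟩


section NthTheory

universe u

variable {C : Set Ordinal.{u}}

def rng (C : Set Ordinal.{u}) (i : Ordinal.{u}) : Set Ordinal.{u} :=
  Set.range (fun j : Set.Iio i => nth.{u,u} C j.1)

lemma nth_def (i : Ordinal) : nth.{u,u} C i = sInf (C \ rng C i) := by
  rw [nth]; rfl

lemma rng_mono {i i' : Ordinal} (h : i ≤ i') : rng C i ⊆ rng C i' := by
  rintro x ⟨⟨j, hj⟩, rfl⟩; exact ⟨⟨j, lt_of_lt_of_le hj h⟩, rfl⟩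

lemma nth_mem {i : Ordinal} (h : (C \ rng C i).Nonempty) : nth.{u,u} C i ∈ C \ rng C i := by
  rw [nth_def]; exact csInf_mem h

lemma active_mono {i i' : Ordinal} (h : i ≤ i') (h' : (C \ rng C i').Nonempty) :
    (C \ rng C i).Nonempty := by
  obtain ⟨x, hx1, hx2⟩ := h'
  exact ⟨x, hx1, fun hx => hx2 (rng_mono h hx)⟩

lemma nth_lt_nth {i i' : Ordinal} (hii' : i < i') (h' : (C \ rng C i').Nonempty) :
    nth.{u,u} C i < nth.{u,u} C i' := by
  have h : (C \ rng C i).Nonempty := active_mono hii'.le h'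
  have h1 : nth.{u,u} C i' ∈ C \ rng C i' := nth_mem h'
  have h2 : nth.{u,u} C i ∈ rng C i' := ⟨⟨i, hii'⟩, rfl⟩
  have hle : nth.{u,u} C i ≤ nth.{u,u} C i' := by
    rw [nth_def]
    exact csInf_le (OrderBot.bddBelow _) ⟨h1.1, fun hx => h1.2 (rng_mono hii'.le hx)⟩
  exact lt_of_le_of_ne hle (fun h => h1.2 (h ▸ h2))

lemma le_nth {i : Ordinal} (h : (C \ rng C i).Nonempty) : i ≤ nth.{u,u} C i := by
  by_contra hlt
  push_neg at hlt
  -- strong induction: ∀ j, (C \ rng C j).Nonempty → j ≤ nth.{u,u} C j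
  revert h hlt
  induction i using Ordinal.induction with
  | h i IH =>
    intro h hlt
    have := nth_lt_nth hlt h
    have h2 : nth.{u,u} C i ≤ nth.{u,u} C (nth.{u,u} C i) := by
      by_contra h3
      push_neg at h3
      exact absurd h3 (not_lt.mpr (le_of_not_gt (fun h4 => (IH (nth.{u,u} C i) hlt (active_mono hlt.le h) (by exact h4)).elim)))
    exact absurd (lt_of_le_of_lt h2 this) (lt_irrefl _)

lemma exists_nth_eq {c : Ordinal} (hc : c ∈ C) : ∃ j, j < c + 1 ∧ nth.{u,u} C j = c := by
  by_contra hcon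
  push_neg at hcon
  have hcr : c ∉ rng C (c+1) := by
    rintro ⟨⟨j, hj⟩, hj2⟩
    exact hcon j hj hj2
  have hact : (C \ rng C (c+1)).Nonempty := ⟨c, hc, hcr⟩
  have h1 : nth.{u,u} C (c+1) ≤ c := by
    rw [nth_def]; exact csInf_le (OrderBot.bddBelow _) ⟨hc, hcr⟩
  have h2 : c + 1 ≤ nth.{u,u} C (c+1) := le_nth hact
  exact absurd (lt_of_lt_of_le (lt_add_one c) (h2.trans h1)) (lt_irrefl _)

lemma subset_rng_otp {u : Ordinal} (hb : C ⊆ Set.Iio u) : C ⊆ rng C (otp.{u,u} C) := by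
  have hne : (otp.{u,u} C) ∈ {i | C ⊆ Set.range (fun j : Set.Iio i => nth.{u,u} C j.1)} := by
    apply csInf_mem
    refine ⟨u + 1, fun c hc => ?_⟩
    obtain ⟨j, hj, hj2⟩ := exists_nth_eq hc
    exact ⟨⟨j, lt_of_lt_of_le hj (add_le_add_left (le_of_lt (hb hc)) 1)⟩, hj2⟩
  unfold rng
  simpa [Set.mem_setOf_eq] using hne

lemma active_of_lt_otp {u j : Ordinal} (hb : C ⊆ Set.Iio u) (hj : j < otp.{u,u} C) :
    (C \ rng C j).Nonempty := by
  by_contra h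
  push_neg at h
  have hsub : C ⊆ Set.range (fun j' : Set.Iio j => nth.{u,u} C j'.1) := by
    intro c hc
    by_contra hc2
    exact (Set.eq_empty_iff_forall_notMem.mp h c) ⟨hc, hc2⟩
  exact absurd hj (not_lt.mpr (csInf_le (OrderBot.bddBelow _) hsub))

lemma mk_le_otp {u : Ordinal} (hb : C ⊆ Set.Iio u) :
    Cardinal.mk C ≤ Cardinal.lift.{u+1, u} (otp.{u,u} C).card := by
  classical
  rcases C.eq_empty_or_nonempty with rfl | ⟨c₀, hc₀⟩
  · simp
  · have hsurj : ∃ f : (Set.Iio (otp.{u,u} C)) → C, Function.Surjective f := by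
      refine ⟨fun j => if h : nth.{u,u} C j.1 ∈ C then ⟨nth.{u,u} C j.1, h⟩ else ⟨c₀, hc₀⟩, ?_⟩
      rintro ⟨c, hc⟩
      obtain ⟨j, hj⟩ := subset_rng_otp hb hc
      refine ⟨j, ?_⟩
      have hj' : nth.{u,u} C j.1 = c := hj
      have hmem : nth.{u,u} C j.1 ∈ C := by rw [hj']; exact hc
      simp only [dif_pos hmem]
      exact Subtype.ext hj'
    obtain ⟨f, hf⟩ := hsurj
    calc Cardinal.mk C ≤ Cardinal.mk (Set.Iio (otp.{u,u} C)) := Cardinal.mk_le_of_surjective hf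
    _ = Cardinal.lift.{u+1, u} (otp.{u,u} C).card := Ordinal.mk_Iio_ordinal _

lemma otp_card_le_mk {u : Ordinal} (hb : C ⊆ Set.Iio u) :
    Cardinal.lift.{u+1, u} (otp.{u,u} C).card ≤ Cardinal.mk C := by
  have hinj : ∃ f : (Set.Iio (otp.{u,u} C)) → C, Function.Injective f := by
    refine ⟨fun j => ⟨nth.{u,u} C j.1, (nth_mem (active_of_lt_otp hb j.2)).1⟩, ?_⟩
    rintro ⟨j, hj⟩ ⟨j', hj'⟩ h
    simp only [Subtype.mk.injEq] at h ⊢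
    rcases lt_trichotomy j j' with hlt | heq | hgt
    · exact absurd h (ne_of_lt (nth_lt_nth hlt (active_of_lt_otp hb hj')))
    · exact heq
    · exact absurd h.symm (ne_of_lt (nth_lt_nth hgt (active_of_lt_otp hb hj)))
  obtain ⟨f, hf⟩ := hinj
  calc Cardinal.lift.{u+1, u} (otp.{u,u} C).card = Cardinal.mk (Set.Iio (otp.{u,u} C)) := (Ordinal.mk_Iio_ordinal _).symm
  _ ≤ Cardinal.mk C := Cardinal.mk_le_of_injective hf

end NthTheory


lemma accPlus_idem {A : Set Ordinal} : accPlus (accPlus A) ⊆ accPlus A := by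
  rintro β ⟨⟨δ, hδ, hδβ⟩, h2⟩
  constructor
  · obtain ⟨z, hz, hzδ⟩ := hδ.1
    exact ⟨z, hz, hzδ.trans hδβ⟩
  · intro y hy
    obtain ⟨q, hq, hq1, hq2⟩ := h2 y hy
    obtain ⟨z, hz, hz1, hz2⟩ := hq.2 y hq1
    exact ⟨z, hz, hz1, hz2.trans hq2⟩

lemma club_accPlus_of_cofinal {γ : Ordinal} {X : Set Ordinal}
    (hcof : Cardinal.aleph0 < γ.cof) (hcofinal : CofinalIn X γ) :
    IsClubIn (accPlus X ∩ Set.Iio γ) γ := by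
  refine ⟨Set.inter_subset_right, accPlus_cofinal hcof hcofinal, fun β hβγ hβ => ?_⟩
  exact ⟨accPlus_idem (accPlus_mono Set.inter_subset_left hβ), hβγ⟩

lemma club_acc {γ : Ordinal} {Cγ : Set Ordinal} (hcof : Cardinal.aleph0 < γ.cof)
    (hclub : IsClubIn Cγ γ) : IsClubIn (acc Cγ) γ := by
  have hsub : acc Cγ ⊆ Cγ := fun x hx => hx.1
  refine ⟨fun x hx => hclub.1 (hsub hx), ?_, ?_⟩
  · intro y hy
    obtain ⟨δ, ⟨hδ1, hδ2⟩, hδ3, hδ4⟩ := accPlus_cofinal hcof hclub.2.1 y hy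
    refine ⟨δ, ⟨hclub.2.2 δ hδ2 hδ1, fun z hz => ?_⟩, hδ3, hδ4⟩
    exact hδ1.2 z hz
  · intro β hβγ hβ
    refine ⟨hclub.2.2 β hβγ (accPlus_mono hsub hβ), fun z hz => ?_⟩
    obtain ⟨q, hq, hq1, hq2⟩ := hβ.2 z hz
    exact ⟨q, hsub hq, hq1, hq2⟩

lemma club_Ioi_Iio {γ t : Ordinal} (ht : t < γ) (hγ : Order.IsSuccLimit γ) :
    IsClubIn (Set.Ioi t ∩ Set.Iio γ) γ := by
  refine ⟨Set.inter_subset_right, fun y hy => ?_, fun β hβγ hβ => ?_⟩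
  · refine ⟨max y t + 1, ⟨lt_of_le_of_lt (le_max_right y t) (lt_add_one _),
      hγ.succ_lt (max_lt hy ht)⟩, lt_of_le_of_lt (le_max_left y t) (lt_add_one _), hγ.succ_lt (max_lt hy ht)⟩
  · obtain ⟨⟨z, hz, hzβ⟩, _⟩ := hβ
    exact ⟨hz.1.trans hzβ, hβγ⟩

def chainD (F : Set Ordinal.{u} → Set Ordinal.{u}) (κ : Ordinal.{u}) : Ordinal.{u} → Set Ordinal.{u} :=
  fun i => Set.Iio κ ∩ ⋂ j : Set.Iio i, F (chainD F κ j.1)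
termination_by i => i
decreasing_by exact j.2

lemma chainD_eq {F : Set Ordinal.{u} → Set Ordinal.{u}} {κ i : Ordinal.{u}} :
    chainD F κ i = Set.Iio κ ∩ ⋂ j : Set.Iio i, F (chainD F κ j.1) := by
  rw [chainD]

lemma chainD_antitone {F : Set Ordinal.{u} → Set Ordinal.{u}} {κ : Ordinal.{u}} {i i' : Ordinal.{u}}
    (h : i ≤ i') : chainD F κ i' ⊆ chainD F κ i := by
  rw [chainD_eq (i := i), chainD_eq (i := i')]
  rintro x ⟨hx1, hx2⟩
  exact ⟨hx1, Set.mem_iInter.mpr fun j => Set.mem_iInter.mp hx2 ⟨j.1, lt_of_lt_of_le j.2 h⟩⟩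

lemma chainD_subset_F {F : Set Ordinal.{u} → Set Ordinal.{u}} {κ : Ordinal.{u}} {i j : Ordinal.{u}}
    (hj : j < i) : chainD F κ i ⊆ F (chainD F κ j) := by
  rw [chainD_eq (i := i)]
  rintro x ⟨_, hx2⟩
  exact Set.mem_iInter.mp hx2 ⟨j, hj⟩

lemma chainD_club {F : Set Ordinal.{u} → Set Ordinal.{u}} {κ : Ordinal.{u}}
    (hκ : Order.IsSuccLimit κ) (hcof : Cardinal.aleph0 < κ.cof)
    (hF : ∀ X, IsClubIn X κ → IsClubIn (F X) κ) :
    ∀ i, i.card < κ.cof → IsClubIn (chainD F κ i) κ := by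
  intro i
  induction i using Ordinal.induction with
  | h i IH =>
    intro hcard
    rw [chainD_eq]
    exact club_iInter_ord hκ hcof hcard fun j hj =>
      hF _ (IH j hj (lt_of_le_of_lt (Ordinal.card_le_card hj.le) hcard))



lemma otp_card_mono {Ca Cg : Set Ordinal.{u}} {a g ρ : Ordinal.{u}}
    (hba : Ca ⊆ Set.Iio a) (hbg : Cg ⊆ Set.Iio g) (hsub : Ca ⊆ Cg)
    (hle : otp.{u,u} Cg ≤ ρ) : (otp.{u,u} Ca).card ≤ ρ.card := by
  have h1 : Cardinal.lift.{u+1,u} (otp.{u,u} Ca).card ≤ Cardinal.lift.{u+1,u} (otp.{u,u} Cg).card :=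
    le_trans (otp_card_le_mk hba) (le_trans (Cardinal.mk_le_mk_of_subset hsub) (mk_le_otp hbg))
  exact le_trans (Cardinal.lift_le.mp h1) (Ordinal.card_le_card hle)

lemma card_contradiction {lam μ : Cardinal.{u}} {PQ Cα : Set Ordinal.{u}} {ξ' α : Ordinal.{u}}
    (hμ : μ ≤ lam)
    (hCα : Cα ⊆ Set.Iio α)
    (hotpCα : (otp.{u,u} Cα).card < μ)
    (hactive : ∀ j, j < lam.ord → (PQ \ rng PQ j).Nonempty)
    (hbd : ∀ j, j < lam.ord → nth.{u,u} PQ j ≤ ξ')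
    (hξα : ξ' < α)
    (hsub : ∀ x ∈ PQ, x < α → x ∈ Cα) : False := by
  have hmap : ∀ j : Set.Iio lam.ord, nth.{u,u} PQ j.1 ∈ Cα := fun j =>
    hsub _ (nth_mem (hactive j.1 j.2)).1 (lt_of_le_of_lt (hbd j.1 j.2) hξα)
  have hinj : Function.Injective (fun j : Set.Iio lam.ord => (⟨nth.{u,u} PQ j.1, hmap j⟩ : Cα)) := by
    rintro ⟨j, hj⟩ ⟨j', hj'⟩ h
    simp only [Subtype.mk.injEq] at h ⊢
    rcases lt_trichotomy j j' with hlt | heq | hgt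
    · exact absurd h (ne_of_lt (nth_lt_nth hlt (hactive j' hj')))
    · exact heq
    · exact absurd h.symm (ne_of_lt (nth_lt_nth hgt (hactive j hj)))
  have h1 : Cardinal.lift.{u+1, u} lam ≤ Cardinal.mk Cα := by
    have h := Cardinal.mk_le_of_injective hinj
    rwa [Ordinal.mk_Iio_ordinal, Cardinal.card_ord] at h
  have h2 : Cardinal.mk Cα ≤ Cardinal.lift.{u+1, u} (otp.{u,u} Cα).card := mk_le_otp hCα
  exact absurd (lt_of_le_of_lt (h1.trans h2) (Cardinal.lift_lt.mpr (lt_of_lt_of_le hotpCα hμ)))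
    (lt_irrefl _)

end Helpers

open Helpers

theorem stmt4 (lam : Cardinal) (hunc : Cardinal.aleph0 < lam)
    (C : Ordinal → Set Ordinal) (hC : IsSquareSeq lam C)
    (hotp : ∀ α < (Order.succ lam).ord, Order.IsSuccLimit α → α.cof < lam → otp (C α) < lam.ord)
    (S : Set Ordinal) (hS : S ⊆ {α | α < (Order.succ lam).ord ∧ α.cof = Cardinal.aleph0})
    (hSstat : IsStationaryIn S (Order.succ lam).ord)
    (hrefl : IsStationaryIn
      {α | α < (Order.succ lam).ord ∧ Cardinal.aleph0 < α.cof ∧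
        IsStationaryIn (S ∩ Set.Iio α) α} (Order.succ lam).ord) :
    ∃ Dstar, IsClubIn Dstar (Order.succ lam).ord ∧
      ∀ D, IsClubIn D (Order.succ lam).ord →
        ∃ α ∈ S, dropSet C α Dstar ⊆ D ∧ CofinalIn (acc (dropSet C α Dstar)) α := by
  classical
  set κ := (Order.succ lam).ord with hκdef
  set Tset := {α | α < κ ∧ Cardinal.aleph0 < α.cof ∧ IsStationaryIn (S ∩ Set.Iio α) α} with hTdef
  have hℵlam : Cardinal.aleph0 ≤ lam := hunc.le
  have hsuccreg : (Order.succ lam).IsRegular := Cardinal.isRegular_succ hℵlam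
  have hcofκ : κ.cof = Order.succ lam := hsuccreg.cof_eq
  have hℵsucc : Cardinal.aleph0 < Order.succ lam := hunc.trans_le (Order.le_succ lam)
  have hcofκℵ : Cardinal.aleph0 < κ.cof := by rw [hcofκ]; exact hℵsucc
  have hκlim : Order.IsSuccLimit κ := Cardinal.isSuccLimit_ord (hℵlam.trans (Order.le_succ lam))
  have hlamordκ : lam.ord < κ := Cardinal.ord_lt_ord.mpr (Order.lt_succ lam)
  have hSfacts : ∀ α ∈ S, α < κ ∧ Order.IsSuccLimit α ∧ α.cof = Cardinal.aleph0 := by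
    intro α hα
    obtain ⟨h1, h2⟩ := hS hα
    exact ⟨h1, Ordinal.aleph0_le_cof.mp (by rw [h2]), h2⟩
  have hTfacts : ∀ γ ∈ Tset, γ < κ ∧ Order.IsSuccLimit γ ∧ Cardinal.aleph0 < γ.cof ∧
      IsStationaryIn (S ∩ Set.Iio γ) γ := by
    intro γ hγ
    obtain ⟨h1, h2, h3⟩ := hγ
    exact ⟨h1, Ordinal.aleph0_le_cof.mp h2.le, h2, h3⟩
  by_contra hcon
  push_neg at hcon
  choose! f hf1 hf2 using hcon
  -- `hf2 : ∀ Dstar, IsClubIn Dstar κ → ∀ α ∈ S, dropSet C α Dstar ⊆ f Dstar →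
  --    ¬ CofinalIn (acc (dropSet C α Dstar)) α`
  obtain ⟨μ, T', hμreg, hμlam, hT'sub, hT'stat, hkey⟩ :
      ∃ (μ : Cardinal) (T' : Set Ordinal), μ.IsRegular ∧ μ ≤ lam ∧ T' ⊆ Tset ∧
        (∀ E, IsClubIn E κ → (T' ∩ E).Nonempty) ∧
        (∀ γ ∈ T', ∀ α ∈ S, C α ⊆ C γ → (otp (C α)).card < μ) := by
    by_cases hreg : lam.IsRegular
    · refine ⟨lam, Tset, hreg, le_refl _, Set.Subset.rfl, hrefl, fun γ _ α hα _ => ?_⟩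
      obtain ⟨h1, h2, h3⟩ := hSfacts α hα
      exact Cardinal.lt_ord.mp (hotp α h1 h2 (by rw [h3]; exact hunc))
    · -- singular case
      have hcofsmall : ∀ γ ∈ Tset, γ.cof < lam := by
        intro γ hγ
        obtain ⟨h1, h2, h3, h4⟩ := hTfacts γ hγ
        have hle : γ.cof ≤ lam := le_trans (Ordinal.cof_le_card γ)
          (Order.lt_succ_iff.mp (Cardinal.lt_ord.mp h1))
        rcases lt_or_eq_of_le hle with h | h
        · exact h
        · exact absurd ⟨hℵlam, by rw [← h, Ordinal.cof_cof]⟩ hreg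
      have hstat : ∃ ρ, ρ < lam.ord ∧
          IsStationaryIn (Tset ∩ {γ | otp (C γ) ≤ ρ}) κ := by
        by_contra hno
        push_neg at hno
        have hno' : ∀ ρ, ρ < lam.ord → ∃ E, IsClubIn E κ ∧
            ((Tset ∩ {γ | otp (C γ) ≤ ρ}) ∩ E) = ∅ := by
          intro ρ hρ
          have := hno ρ hρ
          unfold IsStationaryIn at this
          push_neg at this
          obtain ⟨E, hE1, hE2⟩ := this
          exact ⟨E, hE1, hE2⟩
        choose! E hE1 hE2 using hno'
        have hEE : IsClubIn (Set.Iio κ ∩ ⋂ ρ : Set.Iio lam.ord, E ρ.1) κ := by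
          refine club_iInter_ord hκlim hcofκℵ ?_ (fun ρ hρ => hE1 ρ hρ)
          rw [Cardinal.card_ord, hcofκ]
          exact Order.lt_succ lam
        obtain ⟨γ, hγT, hγE⟩ := hrefl _ hEE
        obtain ⟨h1, h2, h3, h4⟩ := hTfacts γ hγT
        have hγotp : otp (C γ) < lam.ord := hotp γ h1 h2 (hcofsmall γ hγT)
        have : γ ∈ (Tset ∩ {γ' | otp (C γ') ≤ otp (C γ)}) ∩ E (otp (C γ)) :=
          ⟨⟨hγT, by simp only [Set.mem_setOf_eq]; exact le_rfl⟩, (Set.mem_iInter.mp hγE.2) ⟨otp (C γ), hγotp⟩⟩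
        rw [hE2 (otp (C γ)) hγotp] at this
        exact this
      obtain ⟨ρ, hρ, hρstat⟩ := hstat
      refine ⟨Order.succ (ρ.card ⊔ Cardinal.aleph0), Tset ∩ {γ | otp (C γ) ≤ ρ},
        Cardinal.isRegular_succ (le_max_right _ _), ?_, Set.inter_subset_left, hρstat, ?_⟩
      · exact Order.succ_le_of_lt (max_lt (Cardinal.lt_ord.mp hρ) hunc)
      · intro γ hγ α hα hsub
        obtain ⟨hα1, hα2, hα3⟩ := hSfacts α hα
        obtain ⟨hγ1, hγ2, _, _⟩ := hTfacts γ hγ.1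
        have hbα : C α ⊆ Set.Iio α := (hC α hα1 hα2).1.1
        have hbγ : C γ ⊆ Set.Iio γ := (hC γ hγ1 hγ2).1.1
        have h2 : (otp (C α)).card ≤ ρ.card := otp_card_mono hbα hbγ hsub hγ.2
        exact lt_of_le_of_lt (h2.trans (le_max_left _ _)) (Order.lt_succ _)
  -- the club chain
  set F : Set Ordinal → Set Ordinal :=
    fun X => X ∩ (Set.Iio κ ∩ {δ | ∀ c < δ, δ ∈ f (X ∩ Set.Ioi c)}) with hFdef
  have hcardlt : ∀ y, y < κ → y.card < κ.cof := fun y hy => by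
    rw [hcofκ]; exact Cardinal.lt_ord.mp hy
  have hFclub : ∀ X, IsClubIn X κ → IsClubIn (F X) κ := by
    intro X hX
    refine club_inter_pair hcofκℵ hX (diag_club hκlim hcofκℵ hcardlt _ (fun c hc => ?_))
    exact hf1 _ (club_Ioi_inter hX hc)
  set D : Ordinal → Set Ordinal := chainD F κ with hDdef
  have hDclub : ∀ i, i.card < κ.cof → IsClubIn (D i) κ :=
    fun i hi => chainD_club hκlim hcofκℵ hFclub i hi
  set θ := μ.ord with hθdef
  have hθcof : θ.cof = μ := hμreg.cof_eq
  have hθlim : Order.IsSuccLimit θ := Cardinal.isSuccLimit_ord hμreg.1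
  have hθcard : ∀ i, i ≤ θ → i.card < κ.cof := by
    intro i hi
    rw [hcofκ]
    exact lt_of_le_of_lt (le_trans (Ordinal.card_le_card hi)
      (by rw [hθdef, Cardinal.card_ord]; exact hμlam)) (Order.lt_succ lam)
  set P := D θ with hPdef
  have hPclub : IsClubIn P κ := hDclub θ (hθcard θ le_rfl)
  have hPsub : ∀ i, i ≤ θ → P ⊆ D i := fun i hi => chainD_antitone hi
  -- minimum of P
  have hPne : P.Nonempty := by
    obtain ⟨δ, hδ, _, _⟩ := hPclub.2.1 0 hκlim.pos
    exact ⟨δ, hδ⟩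
  set p₀ := sInf P with hp₀def
  have hp₀P : p₀ ∈ P := csInf_mem hPne
  have hp₀κ : p₀ < κ := hPclub.1 hp₀P
  -- a λ-sized increasing family inside P above p₀
  set PQ := P ∩ Set.Ioi p₀ with hPQdef
  have hPQclub : IsClubIn PQ κ := club_Ioi_inter hPclub hp₀κ
  have hPQactive : ∀ j, j.card ≤ lam → (PQ \ rng PQ j).Nonempty := by
    intro j
    induction j using Ordinal.induction with
    | h j IH =>
      intro hj
      have hval : ∀ j', j' < j → nth PQ j' < κ := by
        intro j' hj'
        exact hPQclub.1 (nth_mem (IH j' hj' (le_trans (Ordinal.card_le_card hj'.le) hj))).1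
      obtain ⟨b0, hb0, hb0'⟩ := exists_bound_ord
        (show j.card < κ.cof by rw [hcofκ]; exact lt_of_le_of_lt hj (Order.lt_succ lam))
        (fun j' => nth PQ j') hval
      obtain ⟨z, hz, hz1, _⟩ := hPQclub.2.1 b0 hb0
      refine ⟨z, hz, ?_⟩
      rintro ⟨⟨j', hj'⟩, hj'2⟩
      have hj'3 : nth PQ j' = z := hj'2
      have : nth PQ j' ≤ b0 := hb0' j' hj'
      rw [hj'3] at this
      exact absurd hz1 (not_lt.mpr this)
  have hlamcard : (lam.ord).card ≤ lam := le_of_eq (Cardinal.card_ord lam)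
  obtain ⟨ξ', hξ'κ, hξ'bd⟩ := exists_bound_ord
    (show (lam.ord).card < κ.cof by rw [hcofκ, Cardinal.card_ord]; exact Order.lt_succ lam)
    (fun j => nth PQ j)
    (fun j hj => hPQclub.1 (nth_mem (hPQactive j (le_trans (Ordinal.card_le_card hj.le) hlamcard))).1)
  have hlamordpos : 0 < lam.ord := by
    refine lt_of_lt_of_le Ordinal.omega0_pos ?_
    rw [← Cardinal.ord_aleph0]
    exact Cardinal.ord_le_ord.mpr hℵlam
  have hp₀ξ' : p₀ < ξ' := by
    have h := (nth_mem (hPQactive 0 (by simp))).1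
    exact lt_of_lt_of_le h.2 (hξ'bd 0 hlamordpos)
  -- stabilization of suprema along the chain
  set s : Ordinal → Ordinal → Ordinal := fun i β => sSup (D i ∩ Set.Iio β) with hsdef
  have hθpos : 0 < θ := hθlim.pos
  have hvmem : ∀ β : Ordinal, ∃ i, i < θ ∧
      s i β = sInf ((fun i => s i β) '' Set.Iio θ) := by
    intro β
    have hne : ((fun i => s i β) '' Set.Iio θ).Nonempty := ⟨s 0 β, ⟨0, hθpos, rfl⟩⟩
    obtain ⟨i, hi, hie⟩ := csInf_mem hne
    exact ⟨i, hi, hie⟩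
  choose iFun hiθ his using hvmem
  set v : Ordinal → Ordinal := fun β => sInf ((fun i => s i β) '' Set.Iio θ) with hvdef
  have hsmono : ∀ β i i', i ≤ i' → s i' β ≤ s i β := by
    intro β i i' hii'
    rcases (D i' ∩ Set.Iio β).eq_empty_or_nonempty with h | h
    · rw [hsdef]; simp only [h, csSup_empty]; exact bot_le
    · exact csSup_le_csSup (bddAbove_of_subset_Iio Set.inter_subset_right) h
        (Set.inter_subset_inter (chainD_antitone hii') (le_refl _))
  have hstab : ∀ β i, iFun β ≤ i → i < θ → s i β = v β := by
    intro β i h1 h2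
    refine le_antisymm ?_ (csInf_le (OrderBot.bddBelow _) ⟨i, h2, rfl⟩)
    simp only [hvdef]
    rw [← his β]
    exact hsmono β (iFun β) i h1
  have hvle : ∀ β, v β ≤ β := by
    intro β
    simp only [hvdef]
    rw [← his β]
    exact sSup_le_of_subset_Iio Set.inter_subset_right
  have hvD : ∀ β, p₀ < β → β < κ → ∀ j, j < θ → v β ∈ D j := by
    intro β hβ1 hβ2 j hj
    have hk : max j (iFun β) < θ := max_lt hj (hiθ β)
    have h1 : s (max j (iFun β)) β = v β := hstab β _ (le_max_right _ _) hk
    have hne : (D (max j (iFun β)) ∩ Set.Iio β).Nonempty :=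
      ⟨p₀, hPsub _ hk.le hp₀P, hβ1⟩
    have hmem : s (max j (iFun β)) β ∈ D (max j (iFun β)) := by
      refine mem_of_sSup (hDclub _ (hθcard _ hk.le)).2.2 Set.inter_subset_left hne
        (bddAbove_of_subset_Iio Set.inter_subset_right) ?_
      exact lt_of_le_of_lt (sSup_le_of_subset_Iio Set.inter_subset_right) hβ2
    rw [h1] at hmem
    exact chainD_antitone (le_max_left j (iFun β)) hmem
  have hvP : ∀ β, p₀ < β → β < κ → v β ∈ P := by
    intro β hβ1 hβ2
    rw [hPdef, hDdef, chainD_eq]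
    refine ⟨lt_of_le_of_lt (hvle β) hβ2, Set.mem_iInter.mpr fun j => ?_⟩
    exact chainD_subset_F (lt_add_one j.1) (hvD β hβ1 hβ2 (j.1+1) (hθlim.succ_lt j.2))
  -- choose the reflection point γ
  have hEPclub : IsClubIn ((accPlus P ∩ Set.Iio κ) ∩ Set.Ioi ξ') κ :=
    club_Ioi_inter (club_accPlus_of_cofinal hcofκℵ hPclub.2.1) hξ'κ
  obtain ⟨γ, hγT', hγE⟩ := hT'stat _ hEPclub
  obtain ⟨hγκ, hγlim, hγcof, hγSstat⟩ := hTfacts γ (hT'sub hγT')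
  have hγaccP : γ ∈ accPlus P := hγE.1.1
  have hγξ' : ξ' < γ := hγE.2
  obtain ⟨hCγclub, hCγotp, hCγcoh⟩ := hC γ hγκ hγlim
  -- the club G in γ and the point α
  set G := acc (C γ) ∩ ((accPlus (P ∩ Set.Iio γ) ∩ Set.Iio γ) ∩ (Set.Ioi ξ' ∩ Set.Iio γ)) with hGdef
  have hPγcof : CofinalIn (P ∩ Set.Iio γ) γ := by
    intro y hy
    obtain ⟨p, hp, h1, h2⟩ := hγaccP.2 y hy
    exact ⟨p, ⟨hp, h2⟩, h1, h2⟩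
  have hGclub : IsClubIn G γ :=
    club_inter_pair hγcof (club_acc hγcof hCγclub)
      (club_inter_pair hγcof (club_accPlus_of_cofinal hγcof hPγcof) (club_Ioi_Iio hγξ' hγlim))
  have hGAclub : IsClubIn (accPlus G ∩ Set.Iio γ) γ := club_accPlus_of_cofinal hγcof hGclub.2.1
  obtain ⟨α, hαSγ, hαGA⟩ := hγSstat _ hGAclub
  have hαS : α ∈ S := hαSγ.1
  have hαγ : α < γ := hαSγ.2
  have hαG : α ∈ G := hGclub.2.2 α hαGA.2 hαGA.1
  have hαaccG : α ∈ accPlus G := hαGA.1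
  have hαacc : α ∈ acc (C γ) := hαG.1
  have hαaccP : α ∈ accPlus P := accPlus_mono Set.inter_subset_left hαG.2.1.1
  have hαξ' : ξ' < α := hαG.2.2.1
  obtain ⟨hακ, hαlim, hαcof⟩ := hSfacts α hαS
  have hCoh : C α = C γ ∩ Set.Iio α := hCγcoh α hαacc
  have hCαclub : IsClubIn (C α) α := (hC α hακ hαlim).1
  have hCαIio : C α ⊆ Set.Iio α := hCαclub.1
  have hkeyα : (otp (C α)).card < μ := hkey γ hγT' α hαS
    (by rw [hCoh]; exact Set.inter_subset_left)
  have hp₀α : p₀ < α := hp₀ξ'.trans hαξ'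
  obtain ⟨b, hbθ, hbbd⟩ := exists_bound_ord
    (show (otp (C α)).card < θ.cof by rw [hθcof]; exact hkeyα)
    (fun j => iFun (nth (C α) j)) (fun j _ => hiθ _)
  have hiFunle : ∀ β ∈ C α, iFun β ≤ b := by
    intro β hβ
    obtain ⟨⟨j, hj⟩, hje⟩ := subset_rng_otp hCαIio hβ
    have hje' : nth (C α) j = β := hje
    have h := hbbd j hj
    rwa [hje'] at h
  have hstabb : ∀ β ∈ C α, s b β = v β := fun β hβ => hstab β b (hiFunle β hβ) hbθ
  have hbsucc : b + 1 < θ := hθlim.succ_lt hbθ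
  have hDbclub : IsClubIn (D b) κ := hDclub b (hθcard b hbθ.le)
  -- escape point
  have hesc : ∃ c, p₀ ≤ c ∧ c < α ∧ sInf (D b ∩ Set.Ioi c) ∉ C α := by
    by_contra hbad
    push_neg at hbad
    have hp₀Db : p₀ ∈ D b := hPsub b hbθ.le hp₀P
    have hDsub : ∀ d ∈ D b, p₀ < d → d < α → d ∈ C α := by
      intro d hd h1 h2
      have hne : (D b ∩ Set.Iio d).Nonempty := ⟨p₀, hp₀Db, h1⟩
      have hbdd : BddAbove (D b ∩ Set.Iio d) := bddAbove_of_subset_Iio Set.inter_subset_right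
      have hc'le : sSup (D b ∩ Set.Iio d) ≤ d := sSup_le_of_subset_Iio Set.inter_subset_right
      have hc'p₀ : p₀ ≤ sSup (D b ∩ Set.Iio d) := le_csSup hbdd ⟨hp₀Db, h1⟩
      have hmain : ∀ y, p₀ ≤ y → y < d → sSup (D b ∩ Set.Iio d) = d →
          ∃ z ∈ C α, y < z ∧ z < d := by
        intro y hy1 hy2 heq
        obtain ⟨e, he, hye⟩ := exists_lt_of_lt_csSup hne (by rw [heq]; exact hy2)
        have hqmem : sInf (D b ∩ Set.Ioi y) ∈ D b ∩ Set.Ioi y := csInf_mem ⟨e, he.1, hye⟩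
        have hqle : sInf (D b ∩ Set.Ioi y) ≤ e := csInf_le (OrderBot.bddBelow _) ⟨he.1, hye⟩
        exact ⟨sInf (D b ∩ Set.Ioi y), hbad y hy1 (hy2.trans h2), hqmem.2,
          lt_of_le_of_lt hqle he.2⟩
      rcases lt_or_eq_of_le hc'le with hlt | heq
      · have hd' : sInf (D b ∩ Set.Ioi (sSup (D b ∩ Set.Iio d))) = d := by
          apply le_antisymm
          · exact csInf_le (OrderBot.bddBelow _) ⟨hd, hlt⟩
          · refine le_csInf ⟨d, hd, hlt⟩ ?_
            rintro e ⟨he1, he2⟩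
            by_contra h3
            push_neg at h3
            exact absurd (le_csSup hbdd ⟨he1, h3⟩) (not_le.mpr he2)
        have h := hbad (sSup (D b ∩ Set.Iio d)) hc'p₀ (lt_of_lt_of_le hlt h2.le)
        rw [hd'] at h
        exact h
      · refine hCαclub.2.2 d h2 ⟨?_, ?_⟩
        · obtain ⟨z, hz, _, h4⟩ := hmain p₀ le_rfl h1 heq
          exact ⟨z, hz, h4⟩
        · intro y hy
          obtain ⟨z, hz, h3, h4⟩ := hmain (max y p₀) (le_max_right _ _) (max_lt hy h1) heq
          exact ⟨z, hz, lt_of_le_of_lt (le_max_left _ _) h3, h4⟩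
    refine card_contradiction hμlam hCαIio hkeyα
      (fun j hj => hPQactive j (le_trans (Ordinal.card_le_card hj.le) hlamcard))
      hξ'bd hαξ' ?_
    rintro x ⟨hx1, hx2⟩ hx3
    exact hDsub x (hPsub b hbθ.le hx1) hx2 hx3
  obtain ⟨c, hcp₀, hcα, hm⟩ := hesc
  have hcκ : c < κ := hcα.trans (hαγ.trans hγκ)
  set Dstar := D b ∩ Set.Ioi c with hDstardef
  have hDstarclub : IsClubIn Dstar κ := club_Ioi_inter hDbclub hcκ
  have hDstarne : Dstar.Nonempty := by
    obtain ⟨δ, hδ, _, _⟩ := hDstarclub.2.1 0 hκlim.pos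
    exact ⟨δ, hδ⟩
  have hmmem : sInf Dstar ∈ Dstar := csInf_mem hDstarne
  set m := sInf Dstar with hmdef
  have hmnot : m ∉ C α := hm
  have hmc : c < m := hmmem.2
  have hmDb : m ∈ D b := hmmem.1
  have hmα : m < α := by
    obtain ⟨p, hp, h1, h2⟩ := hαaccP.2 c hcα
    exact lt_of_le_of_lt (csInf_le (OrderBot.bddBelow _) ⟨hPsub b hbθ.le hp, h1⟩) h2
  have hp₀m : p₀ < m := lt_of_le_of_lt hcp₀ hmc
  -- KEY A : drop set is inside f Dstar
  have hKeyA : dropSet C α Dstar ⊆ f Dstar := by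
    rintro x ⟨β, hβ, rfl⟩
    obtain ⟨hβCα, hβinf⟩ := hβ
    have hβm : m < β := lt_of_le_of_ne hβinf (fun h => hmnot (by rw [h]; exact hβCα))
    have hβα : β < α := hCαIio hβCα
    have hβκ : β < κ := hβα.trans (hαγ.trans hγκ)
    have hp₀β : p₀ < β := hp₀m.trans hβm
    have hmem2 : m ∈ Dstar ∩ Set.Iio β := ⟨hmmem, hβm⟩
    have hbdd1 : BddAbove (Dstar ∩ Set.Iio β) := bddAbove_of_subset_Iio Set.inter_subset_right
    have hbdd2 : BddAbove (D b ∩ Set.Iio β) := bddAbove_of_subset_Iio Set.inter_subset_right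
    have hwv : sSup (Dstar ∩ Set.Iio β) = s b β := by
      apply le_antisymm
      · exact csSup_le_csSup hbdd2 ⟨m, hmem2⟩
          (Set.inter_subset_inter Set.inter_subset_left (le_refl _))
      · refine csSup_le ⟨m, hmDb, hβm⟩ ?_
        intro e he
        by_cases hec : c < e
        · exact le_csSup hbdd1 ⟨⟨he.1, hec⟩, he.2⟩
        · exact le_trans (le_trans (not_lt.mp hec) hmc.le) (le_csSup hbdd1 hmem2)
    have hsb : s b β = v β := hstabb β hβCα
    have hvFb : v β ∈ F (D b) :=
      chainD_subset_F (lt_add_one b) (hvD β hp₀β hβκ (b+1) hbsucc)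
    have hcv : c < v β := by
      rw [← hsb, ← hwv]
      exact lt_of_lt_of_le hmc (le_csSup hbdd1 hmem2)
    have hdiag : v β ∈ f (D b ∩ Set.Ioi c) := hvFb.2.2 c hcv
    show sSup (Dstar ∩ Set.Iio β) ∈ f Dstar
    rw [hwv, hsb]
    exact hdiag
  -- KEY B : accumulation points of the drop set are cofinal in α
  have hKeyB : CofinalIn (acc (dropSet C α Dstar)) α := by
    intro x hx
    obtain ⟨β', hβ'G, hβ'1, hβ'2⟩ := hαaccG.2 (max x m) (max_lt hx hmα)
    have hβ'accCγ : β' ∈ acc (C γ) := hβ'G.1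
    have hβ'accP : β' ∈ accPlus P := accPlus_mono Set.inter_subset_left hβ'G.2.1.1
    have hβ'm : m < β' := lt_of_le_of_lt (le_max_right x m) hβ'1
    have hβ'c : c < β' := hmc.trans hβ'm
    have hβ'Cα : β' ∈ C α := by rw [hCoh]; exact ⟨hβ'accCγ.1, hβ'2⟩
    have hβ'acc : ∀ y, y < β' → ∃ z ∈ C α, y < z ∧ z < β' := by
      intro y hy
      obtain ⟨z, hz, h1, h2⟩ := hβ'accCγ.2 y hy
      exact ⟨z, by rw [hCoh]; exact ⟨hz, h2.trans hβ'2⟩, h1, h2⟩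
    have hbddD : ∀ β'' : Ordinal, BddAbove (Dstar ∩ Set.Iio β'') :=
      fun _ => bddAbove_of_subset_Iio Set.inter_subset_right
    have hwβ' : sSup (Dstar ∩ Set.Iio β') = β' := by
      refine le_antisymm (sSup_le_of_subset_Iio Set.inter_subset_right) ?_
      by_contra h
      push_neg at h
      obtain ⟨p, hp, h1, h2⟩ := hβ'accP.2 (max (sSup (Dstar ∩ Set.Iio β')) c)
        (max_lt h hβ'c)
      have hpmem : p ∈ Dstar ∩ Set.Iio β' :=
        ⟨⟨hPsub b hbθ.le hp, lt_of_le_of_lt (le_max_right _ _) h1⟩, h2⟩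
      exact absurd (le_csSup (hbddD β') hpmem) (not_le.mpr (lt_of_le_of_lt (le_max_left _ _) h1))
    have hβ'drop : β' ∈ dropSet C α Dstar := ⟨β', ⟨hβ'Cα, hβ'm.le⟩, hwβ'⟩
    refine ⟨β', ⟨hβ'drop, ?_⟩, lt_of_le_of_lt (le_max_left x m) hβ'1, hβ'2⟩
    intro y hy
    obtain ⟨p, hpP, hp1, hp2⟩ := hβ'accP.2 (max y m) (max_lt hy hβ'm)
    obtain ⟨β'', hβ''Cα, h1'', h2''⟩ := hβ'acc p hp2
    have hmβ'' : m < β'' := lt_of_le_of_lt (le_max_right y m) (hp1.trans h1'')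
    have hpDstar : p ∈ Dstar ∩ Set.Iio β'' :=
      ⟨⟨hPsub b hbθ.le hpP, hmc.trans (lt_of_le_of_lt (le_max_right y m) hp1)⟩, h1''⟩
    refine ⟨sSup (Dstar ∩ Set.Iio β''), ⟨β'', ⟨hβ''Cα, hmβ''.le⟩, rfl⟩, ?_, ?_⟩
    · exact lt_of_lt_of_le (lt_of_le_of_lt (le_max_left y m) hp1) (le_csSup (hbddD β'') hpDstar)
    · exact lt_of_le_of_lt (sSup_le_of_subset_Iio Set.inter_subset_right) h2''
  exact hf2 Dstar hDstarclub α hαS hKeyA hKeyB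

end
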